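/- Let $G$ be a group, $l \ge 1$, and let $a_1,\dots,a_{2l+1}$ be elements of $G$ satisfying the braid relations. Set $\bar b_i = a_{i+1}^{-1} a_i a_{i+1}$ and $\phi_l = a_{2l+1}^{l+1} a_{2l-1}^{l} \cdots a_5^{3} a_3^{2} a_1$. Then for all finite sequences $D = (d_1,\dots,d_{k_1})$ and $E = (e_1,\dots,e_{k_2})$ of elements of $G$, the concatenated sequence $D \frown (a_1, a_2, \dots, a_{2l+1}) \frown (a_1, a_2, \dots, a_{2l}) \frown E$ is Hurwitz equivalent up to simultaneous conjugation to $(\phi_l^{-1} d_1 \phi_l, \dots, \phi_l^{-1} d_{k_1} \phi_l) \frown (\bar b_2, \bar b_4, \dots, \bar b_{2l}) \frown (a_1, a_2, \dots, a_{2l}) \frown (a_{2l+1}, \dots, a_{2l+1}) \frown (\phi_l^{-1} e_1 \phi_l, \dots, \phi_l^{-1} e_{k_2} \phi_l)$, where $a_{2l+1}$ is repeated $l+1$ times. -/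

import Mathlib

/-- One elementary (Hurwitz) transformation of sequences in a group. -/
def HurwitzStep {G : Type*} [Group G] (s t : List G) : Prop :=
  ∃ (l₁ l₂ : List G) (x y : G),
    (s = l₁ ++ x :: y :: l₂ ∧ t = l₁ ++ (x * y * x⁻¹) :: x :: l₂) ∨
    (s = l₁ ++ x :: y :: l₂ ∧ t = l₁ ++ y :: (y⁻¹ * x * y) :: l₂)

/-- One move of Hurwitz equivalence up to simultaneous conjugation. -/
def HurwitzStepC {G : Type*} [Group G] (s t : List G) : Prop :=
  HurwitzStep s t ∨ ∃ ψ : G, t = s.map fun w => ψ * w * ψ⁻¹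

/-- Hurwitz equivalence up to simultaneous conjugation. -/
def HurwitzEquivC {G : Type*} [Group G] : List G → List G → Prop :=
  Relation.ReflTransGen HurwitzStepC

/-- The sequence `a m, a (m+1), …, a k` (ascending indices). -/
def seqAsc {G : Type*} (a : ℕ → G) (m k : ℕ) : List G :=
  (List.range (k + 1 - m)).map fun i => a (m + i)

/-- `φ l = a (2l+1) ^ (l+1) * a (2l-1) ^ l * ⋯ * a 5 ^ 3 * a 3 ^ 2 * a 1`. -/
def phiOdd {G : Type*} [Group G] (a : ℕ → G) (l : ℕ) : G :=
  ((List.range (l + 1)).map fun j => a (2 * (l - j) + 1) ^ (l - j + 1)).prod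

namespace S6

variable {G : Type*} [Group G]

/-- Plain Hurwitz equivalence (no conjugation move). -/
def HEq' : List G → List G → Prop := Relation.ReflTransGen HurwitzStep

lemma HEq'.rfl {s : List G} : HEq' s s := Relation.ReflTransGen.refl

lemma HEq'.trans {s t u : List G} (h : HEq' s t) (h' : HEq' t u) : HEq' s u :=
  Relation.ReflTransGen.trans h h'

lemma hstep_symm : Symmetric (@HurwitzStep G _) := by
  rintro s t ⟨l₁, l₂, x, y, ⟨h1, h2⟩ | ⟨h1, h2⟩⟩
  · refine ⟨l₁, l₂, x * y * x⁻¹, x, Or.inr ⟨h2, ?_⟩⟩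
    rw [h1]
    have : x⁻¹ * (x * y * x⁻¹) * x = y := by group
    rw [this]
  · refine ⟨l₁, l₂, y, y⁻¹ * x * y, Or.inl ⟨h2, ?_⟩⟩
    rw [h1]
    have : y * (y⁻¹ * x * y) * y⁻¹ = x := by group
    rw [this]

lemma HEq'.symm {s t : List G} (h : HEq' s t) : HEq' t s := by
  induction h with
  | refl => exact Relation.ReflTransGen.refl
  | tail _ hst ih => exact Relation.ReflTransGen.head (hstep_symm hst) ih

lemma hstep_mono {s t : List G} (p q : List G) (h : HurwitzStep s t) :
    HurwitzStep (p ++ s ++ q) (p ++ t ++ q) := by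
  obtain ⟨l₁, l₂, x, y, ⟨h1, h2⟩ | ⟨h1, h2⟩⟩ := h
  · exact ⟨p ++ l₁, l₂ ++ q, x, y, Or.inl ⟨by simp [h1], by simp [h2]⟩⟩
  · exact ⟨p ++ l₁, l₂ ++ q, x, y, Or.inr ⟨by simp [h1], by simp [h2]⟩⟩

lemma HEq'.mono {s t : List G} (p q : List G) (h : HEq' s t) :
    HEq' (p ++ s ++ q) (p ++ t ++ q) := by
  induction h with
  | refl => exact HEq'.rfl
  | tail _ hst ih => exact ih.trans (Relation.ReflTransGen.single (hstep_mono p q hst))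

lemma move1 (p q : List G) (x y : G) :
    HEq' (p ++ x :: y :: q) (p ++ (x * y * x⁻¹) :: x :: q) :=
  Relation.ReflTransGen.single ⟨p, q, x, y, Or.inl ⟨rfl, rfl⟩⟩

lemma move2 (p q : List G) (x y : G) :
    HEq' (p ++ x :: y :: q) (p ++ y :: (y⁻¹ * x * y) :: q) :=
  Relation.ReflTransGen.single ⟨p, q, x, y, Or.inr ⟨rfl, rfl⟩⟩

lemma swap (p q : List G) {x y : G} (h : x * y = y * x) :
    HEq' (p ++ x :: y :: q) (p ++ y :: x :: q) := by
  have := move1 p q x y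
  rwa [show x * y * x⁻¹ = y by rw [h]; group] at this

/-- pull an element left through a replicate block -/
lemma pull_left (n : ℕ) (x y : G) (q : List G) :
    HEq' (List.replicate n x ++ y :: q) ((x ^ n * y * (x ^ n)⁻¹) :: (List.replicate n x ++ q)) := by
  induction n generalizing q with
  | zero => simpa using HEq'.rfl
  | succ n ih =>
    have step1 : HEq' (List.replicate (n+1) x ++ y :: q)
        ([x] ++ ((x ^ n * y * (x ^ n)⁻¹) :: (List.replicate n x ++ q))) := by
      have := (ih q).mono [x] []
      simpa [List.replicate_succ] using this
    refine step1.trans ?_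
    have := move1 ([] : List G) (List.replicate n x ++ q) x (x ^ n * y * (x ^ n)⁻¹)
    simp only [List.nil_append] at this
    rw [show x * (x ^ n * y * (x ^ n)⁻¹) * x⁻¹ = x ^ (n+1) * y * (x ^ (n+1))⁻¹ by
      rw [pow_succ]; group] at this
    simpa [List.replicate_succ] using this


lemma conj_pow_eq {x c : G} (h : x * c = c * x) (n : ℕ) :
    x ^ n * c * (x ^ n)⁻¹ = c := by
  have h' : Commute x c := h
  simp [((h'.pow_left n)).eq, mul_assoc]

/-- slide a commuting element left through a list -/
lemma slide_left {L : List G} {c : G} (h : ∀ z ∈ L, z * c = c * z) (q : List G) :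
    HEq' (L ++ c :: q) (c :: (L ++ q)) := by
  induction L with
  | nil => exact HEq'.rfl
  | cons z L ih =>
    have h1 : HEq' (z :: (L ++ c :: q)) (z :: c :: (L ++ q)) := by
      have := (ih (fun w hw => h w (List.mem_cons_of_mem z hw))).mono [z] []
      simpa using this
    refine (by simpa using h1 : HEq' ((z :: L) ++ c :: q) (z :: c :: (L ++ q))).trans ?_
    have := swap ([] : List G) (L ++ q) (h z List.mem_cons_self)
    simpa using this

section Key

variable (s t K : G) (hst : s * t * s = t * s * t) (htK : t * K * t = K * t * K)
  (hsK : s * K = K * s)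

include hst htK hsK

lemma show5 : HEq' [t, K, s, t, s] [K, t, K, s, t] := by
  have hA := move1 [t, K, s] [] t s
  have hB := move1 [t, K] [t] s (t * s * t⁻¹)
  have hC := move1 [t] [s, t] K t
  have hD := move1 ([] : List G) [K, s, t] t (K * t * K⁻¹)
  rw [show s * (t * s * t⁻¹) * s⁻¹ = (s * t * s) * t⁻¹ * s⁻¹ by group, hst,
    show t * s * t * t⁻¹ * s⁻¹ = t by group] at hB
  rw [show t * (K * t * K⁻¹) * t⁻¹ = (t * K * t) * K⁻¹ * t⁻¹ by group, htK,
    show K * t * K * K⁻¹ * t⁻¹ = K by group] at hD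
  simp only [List.cons_append, List.nil_append, List.append_nil] at hA hB hC hD
  exact ((hA.trans hB).trans hC).trans hD

lemma rot (m : ℕ) :
    HEq' ([t, K, s, t] ++ List.replicate m s) (List.replicate m K ++ [t, K, s, t]) := by
  induction m with
  | zero => simpa using HEq'.rfl
  | succ m ih =>
    have h1 : HEq' ([t, K, s, t] ++ List.replicate (m+1) s)
        ([K] ++ ([t, K, s, t] ++ List.replicate m s)) := by
      have := (show5 s t K hst htK hsK).mono [] (List.replicate m s)
      simpa [List.replicate_succ] using this
    refine h1.trans ?_
    have := ih.mono [K] []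
    simpa [List.replicate_succ] using this

lemma keyG (m : ℕ) :
    HEq' (List.replicate m s ++
        ((s ^ m)⁻¹ * t * s ^ m) :: K :: s :: ((s ^ m)⁻¹ * t * s ^ m) :: [])
      ((K ^ m * t * (K ^ m)⁻¹) :: s ::
        (K ^ (m+1) * t * (K ^ (m+1))⁻¹) :: List.replicate (m+1) K) := by
  set u := (s ^ m)⁻¹ * t * s ^ m with hu
  -- (a) pull u left: entry becomes t
  have ha : HEq' (List.replicate m s ++ u :: [K, s, u])
      (t :: (List.replicate m s ++ [K, s, u])) := by
    have := pull_left m s u [K, s, u]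
    rwa [show s ^ m * u * (s ^ m)⁻¹ = t by rw [hu]; group] at this
  -- (b) slide K left through replicate m s
  have hb : HEq' (t :: (List.replicate m s ++ K :: [s, u]))
      (t :: K :: (List.replicate m s ++ [s, u])) := by
    have h0 := pull_left m s K [s, u]
    rw [conj_pow_eq hsK m] at h0
    have := h0.mono [t] []
    simpa using this
  -- (c) pull u left through replicate (m+1) s
  have hc : HEq' (t :: K :: (List.replicate (m+1) s ++ [u]))
      (t :: K :: ((s * t * s⁻¹) :: List.replicate (m+1) s)) := by
    have h0 := pull_left (m+1) s u []
    rw [show s ^ (m+1) * u * (s ^ (m+1))⁻¹ = s * t * s⁻¹ by rw [hu, pow_succ]; group] at h0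
    have := h0.mono [t, K] []
    simpa using this
  -- (d) move2
  have hd : HEq' [t, K, s * t * s⁻¹, s] [t, K, s, t] := by
    have := move2 [t, K] ([] : List G) (s * t * s⁻¹) s
    rwa [show s⁻¹ * (s * t * s⁻¹) * s = t by group] at this
  have hd' : HEq' ((t :: K :: (s * t * s⁻¹) :: s :: []) ++ List.replicate m s)
      ((t :: K :: s :: t :: []) ++ List.replicate m s) := hd.mono [] (List.replicate m s)
  -- (e) rotate
  have he := rot s t K hst htK hsK m
  -- (f) pull t left through replicate m K
  have hf : HEq' (List.replicate m K ++ t :: [K, s, t])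
      ((K ^ m * t * (K ^ m)⁻¹) :: (List.replicate m K ++ [K, s, t])) :=
    pull_left m K t [K, s, t]
  -- (g) slide s left through replicate (m+1) K
  have hg : HEq' ((K ^ m * t * (K ^ m)⁻¹) :: (List.replicate (m+1) K ++ s :: [t]))
      ((K ^ m * t * (K ^ m)⁻¹) :: s :: (List.replicate (m+1) K ++ [t])) := by
    have h0 := pull_left (m+1) K s [t]
    rw [conj_pow_eq (by rw [hsK]) (m+1)] at h0
    have := h0.mono [K ^ m * t * (K ^ m)⁻¹] []
    simpa using this
  -- (h) pull t left through replicate (m+1) K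
  have hh : HEq' ((K ^ m * t * (K ^ m)⁻¹) :: s :: (List.replicate (m+1) K ++ [t]))
      ((K ^ m * t * (K ^ m)⁻¹) :: s :: ((K ^ (m+1) * t * (K ^ (m+1))⁻¹) ::
        List.replicate (m+1) K)) := by
    have h0 := pull_left (m+1) K t []
    have := h0.mono [K ^ m * t * (K ^ m)⁻¹, s] []
    simpa using this
  -- assemble
  refine ha.trans ?_
  have hb' : HEq' (t :: (List.replicate m s ++ [K, s, u]))
      (t :: K :: (List.replicate (m+1) s ++ [u])) := by
    have := hb
    simpa [List.replicate_succ' (n := m), List.append_assoc] using this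
  refine (hb'.trans hc).trans ?_
  have hcd : HEq' (t :: K :: ((s * t * s⁻¹) :: List.replicate (m+1) s))
      ((t :: K :: s :: t :: []) ++ List.replicate m s) := by
    have := hd'
    simpa [List.replicate_succ] using this
  refine hcd.trans (he.trans ?_)
  have hf' : HEq' (List.replicate m K ++ [t, K, s, t])
      ((K ^ m * t * (K ^ m)⁻¹) :: (List.replicate (m+1) K ++ s :: [t])) := by
    have := hf
    simpa [List.replicate_succ' (n := m), List.append_assoc] using this
  exact hf'.trans (hg.trans hh)

end Key


lemma toC {s t : List G} (h : HEq' s t) : HurwitzEquivC s t := by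
  induction h with
  | refl => exact Relation.ReflTransGen.refl
  | tail _ hst ih => exact ih.tail (Or.inl hst)

lemma conjC (ψ : G) (s : List G) : HurwitzEquivC s (s.map fun w => ψ * w * ψ⁻¹) :=
  Relation.ReflTransGen.single (Or.inr ⟨ψ, rfl⟩)

lemma CEq.trans {s t u : List G} (h : HurwitzEquivC s t) (h' : HurwitzEquivC t u) :
    HurwitzEquivC s u := Relation.ReflTransGen.trans h h'

lemma map_id_of {L : List G} {f : G → G} (h : ∀ x ∈ L, f x = x) : L.map f = L := by
  induction L with
  | nil => rfl
  | cons z L ih =>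
    simp only [List.map_cons, h z List.mem_cons_self,
      ih (fun x hx => h x (List.mem_cons_of_mem z hx))]

section Seq

variable (a : ℕ → G)

lemma seqAsc_one (n : ℕ) : seqAsc a 1 n = (List.range n).map fun i => a (i + 1) := by
  simp [seqAsc, Nat.add_comm]

lemma seqAsc_zero : seqAsc a 1 0 = [] := by simp [seqAsc_one]

lemma seqAsc_succ (n : ℕ) : seqAsc a 1 (n + 1) = seqAsc a 1 n ++ [a (n + 1)] := by
  simp [seqAsc_one, List.range_succ]

lemma phiOdd_zero : phiOdd a 0 = a 1 := by simp [phiOdd]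

lemma phiOdd_succ (l : ℕ) : phiOdd a (l + 1) = a (2 * l + 3) ^ (l + 2) * phiOdd a l := by
  unfold phiOdd
  rw [List.range_succ_eq_map, List.map_cons, List.prod_cons, List.map_map]
  have e1 : 2 * (l + 1 - 0) + 1 = 2 * l + 3 := by omega
  have e2 : l + 1 - 0 + 1 = l + 2 := by omega
  rw [e1, e2]
  congr 1
  apply congrArg List.prod
  apply List.map_congr_left
  intro j hj
  simp only [List.mem_range] at hj
  have e3 : l + 1 - (j + 1) = l - j := by omega
  simp [Function.comp, Nat.succ_eq_add_one, e3]

/-- the tail of phiOdd -/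
def tailP : ℕ → G
  | 0 => 1
  | m + 1 => phiOdd a m

lemma phiOdd_eq_pow_mul (l : ℕ) :
    phiOdd a l = a (2 * l + 1) ^ (l + 1) * tailP a l := by
  cases l with
  | zero => simp [phiOdd_zero, tailP]
  | succ m => rw [phiOdd_succ, tailP]; congr 2 <;> omega

lemma commute_phiOdd {c : G} (l : ℕ) (h : ∀ j, j ≤ l → Commute (a (2 * j + 1)) c) :
    Commute (phiOdd a l) c := by
  unfold phiOdd
  apply Commute.list_prod_left
  intro x hx
  simp only [List.mem_map, List.mem_range] at hx
  obtain ⟨j, hj, rfl⟩ := hx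
  exact (h (l - j) (Nat.sub_le l j)).pow_left _

lemma commute_tailP {c : G} (l : ℕ) (h : ∀ j, j + 1 ≤ l → Commute (a (2 * j + 1)) c) :
    Commute (tailP a l) c := by
  cases l with
  | zero => exact Commute.one_left c
  | succ m => exact commute_phiOdd a m (fun j hj => h j (by omega))

end Seq


lemma conj_by_commute {T X : G} (h : Commute T X) : T⁻¹ * X * T = X := by
  rw [mul_assoc, ← h.eq, ← mul_assoc]
  simp

lemma conj_eq_self_of_commute {x w : G} (h : Commute x w) : x * w * x⁻¹ = w := by
  rw [h.eq, mul_assoc]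
  simp

lemma conj_conj {x y : G} (h : Commute x y) (d : G) :
    x⁻¹ * (y⁻¹ * d * y) * x⁻¹⁻¹ = (x * y)⁻¹ * d * (x * y) := by
  rw [inv_inv, mul_inv_rev]
  calc x⁻¹ * (y⁻¹ * d * y) * x = (x⁻¹ * y⁻¹) * d * (y * x) := by group
    _ = (y⁻¹ * x⁻¹) * d * (y * x) := by rw [h.inv_inv.eq]
    _ = y⁻¹ * x⁻¹ * d * (x * y) := by rw [h.symm.eq]


theorem aux (l : ℕ) : ∀ (a : ℕ → G),
    (∀ i, 1 ≤ i → i + 1 ≤ 2 * l + 1 →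
      a i * a (i + 1) * a i = a (i + 1) * a i * a (i + 1)) →
    (∀ i j, 1 ≤ i → j ≤ 2 * l + 1 → i + 2 ≤ j → a i * a j = a j * a i) →
    ∀ D E : List G,
    HurwitzEquivC
      (D ++ seqAsc a 1 (2 * l + 1) ++ seqAsc a 1 (2 * l) ++ E)
      ((D.map fun d => (phiOdd a l)⁻¹ * d * phiOdd a l) ++
        ((List.range l).map fun j =>
          (a (2 * j + 3))⁻¹ * a (2 * j + 2) * a (2 * j + 3)) ++
        seqAsc a 1 (2 * l) ++
        List.replicate (l + 1) (a (2 * l + 1)) ++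
        (E.map fun e => (phiOdd a l)⁻¹ * e * phiOdd a l)) := by
  induction l with
  | zero =>
    intro a hb hc D E
    have h := conjC ((a 1)⁻¹) (D ++ a 1 :: E)
    have e : (D ++ a 1 :: E).map (fun w => (a 1)⁻¹ * w * (a 1)⁻¹⁻¹)
        = (D.map fun d => (a 1)⁻¹ * d * a 1) ++ a 1 :: (E.map fun e => (a 1)⁻¹ * e * a 1) := by
      simp [List.map_append]
    rw [e] at h
    have e1 : seqAsc a 1 (2 * 0 + 1) = [a 1] := by
      simp [seqAsc_one, List.range_succ]
    have e0 : seqAsc a 1 (2 * 0) = [] := by simp [seqAsc_one]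
    simpa [e1, e0, phiOdd_zero, seqAsc_zero] using h
  | succ l ih =>
    intro a hb hc D E
    have hb' : ∀ i, 1 ≤ i → i + 1 ≤ 2 * l + 1 →
        a i * a (i+1) * a i = a (i+1) * a i * a (i+1) :=
      fun i h1 h2 => hb i h1 (by omega)
    have hc' : ∀ i j, 1 ≤ i → j ≤ 2 * l + 1 → i + 2 ≤ j → a i * a j = a j * a i :=
      fun i j h1 h2 h3 => hc i j h1 (by omega) h3
    have hst : a (2*l+1) * a (2*l+2) * a (2*l+1) = a (2*l+2) * a (2*l+1) * a (2*l+2) := by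
      have := hb (2*l+1) (by omega) (by omega)
      rwa [show 2*l+1+1 = 2*l+2 by omega] at this
    have htK : a (2*l+2) * a (2*l+3) * a (2*l+2) = a (2*l+3) * a (2*l+2) * a (2*l+3) := by
      have := hb (2*l+2) (by omega) (by omega)
      rwa [show 2*l+2+1 = 2*l+3 by omega] at this
    have hsK : a (2*l+1) * a (2*l+3) = a (2*l+3) * a (2*l+1) :=
      hc (2*l+1) (2*l+3) (by omega) (by omega) (by omega)
    have memA : ∀ z ∈ seqAsc a 1 (2*l), ∃ i, i + 1 ≤ 2*l ∧ z = a (i+1) := by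
      intro z hz
      rw [seqAsc_one] at hz
      simp only [List.mem_map, List.mem_range] at hz
      obtain ⟨i, hi, rfl⟩ := hz
      exact ⟨i, by omega, rfl⟩
    have hAt : ∀ z ∈ seqAsc a 1 (2*l), Commute z (a (2*l+2)) := by
      intro z hz; obtain ⟨i, hi, rfl⟩ := memA z hz
      exact hc (i+1) (2*l+2) (by omega) (by omega) (by omega)
    have hAK : ∀ z ∈ seqAsc a 1 (2*l), Commute z (a (2*l+3)) := by
      intro z hz; obtain ⟨i, hi, rfl⟩ := memA z hz
      exact hc (i+1) (2*l+3) (by omega) (by omega) (by omega)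
    have hφK : Commute (phiOdd a l) (a (2*l+3)) :=
      commute_phiOdd a l (fun j hj => hc (2*j+1) (2*l+3) (by omega) (by omega) (by omega))
    have hφs : Commute (phiOdd a l) (a (2*l+1)) := by
      apply commute_phiOdd a l
      intro j hj
      rcases Nat.lt_or_ge j l with h | h
      · exact hc (2*j+1) (2*l+1) (by omega) (by omega) (by omega)
      · have hjl : j = l := by omega
        subst hjl; exact Commute.refl _
    have hconj_t : (phiOdd a l)⁻¹ * a (2*l+2) * phiOdd a l
        = (a (2*l+1) ^ (l+1))⁻¹ * a (2*l+2) * a (2*l+1) ^ (l+1) := by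
      rw [phiOdd_eq_pow_mul]
      have h1 : Commute (tailP a l) (a (2*l+1)) :=
        commute_tailP a l (fun j hj => hc (2*j+1) (2*l+1) (by omega) (by omega) (by omega))
      have h2 : Commute (tailP a l) (a (2*l+2)) :=
        commute_tailP a l (fun j hj => hc (2*j+1) (2*l+2) (by omega) (by omega) (by omega))
      have h3 : Commute (tailP a l)
          ((a (2*l+1) ^ (l+1))⁻¹ * a (2*l+2) * a (2*l+1) ^ (l+1)) :=
        ((h1.pow_right (l+1)).inv_right.mul_right h2).mul_right (h1.pow_right (l+1))
      calc (a (2*l+1) ^ (l+1) * tailP a l)⁻¹ * a (2*l+2) * (a (2*l+1) ^ (l+1) * tailP a l)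
          = (tailP a l)⁻¹ * ((a (2*l+1) ^ (l+1))⁻¹ * a (2*l+2) * a (2*l+1) ^ (l+1))
            * tailP a l := by group
        _ = (a (2*l+1) ^ (l+1))⁻¹ * a (2*l+2) * a (2*l+1) ^ (l+1) := conj_by_commute h3
    have hconj_K : (phiOdd a l)⁻¹ * a (2*l+3) * phiOdd a l = a (2*l+3) := conj_by_commute hφK
    have hconj_s : (phiOdd a l)⁻¹ * a (2*l+1) * phiOdd a l = a (2*l+1) := conj_by_commute hφs
    have eA3 : seqAsc a 1 (2*l+3) = seqAsc a 1 (2*l+1) ++ [a (2*l+2), a (2*l+3)] := by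
      rw [show 2*l+3 = 2*l+1+1+1 by omega, seqAsc_succ, seqAsc_succ]
      simp [show 2*l+1+1 = 2*l+2 by omega, show 2*l+1+1+1 = 2*l+3 by omega, List.append_assoc]
    have eA2 : seqAsc a 1 (2*l+2) = seqAsc a 1 (2*l) ++ [a (2*l+1), a (2*l+2)] := by
      rw [show 2*l+2 = 2*l+1+1 by omega, seqAsc_succ, seqAsc_succ]
      simp [show 2*l+1+1 = 2*l+2 by omega, List.append_assoc]
    have eB : (List.range (l+1)).map (fun j => (a (2*j+3))⁻¹ * a (2*j+2) * a (2*j+3))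
        = ((List.range l).map fun j => (a (2*j+3))⁻¹ * a (2*j+2) * a (2*j+3))
          ++ [(a (2*l+3))⁻¹ * a (2*l+2) * a (2*l+3)] := by
      rw [List.range_succ]; simp
    -- normalize the goal
    simp only [show 2*(l+1)+1 = 2*l+3 from by omega, show 2*(l+1) = 2*l+2 from by omega,
      show l+1+1 = l+2 from by omega, show 2*l+2+1 = 2*l+3 from by omega]
    rw [eA3, eA2, eB, phiOdd_succ]
    set A1 := seqAsc a 1 (2*l+1) with hA1
    set A0 := seqAsc a 1 (2*l) with hA0def
    set φ := phiOdd a l with hphi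
    set s := a (2*l+1) with hs
    set t := a (2*l+2) with ht
    set K := a (2*l+3) with hK
    set Bq := (List.range l).map (fun j => (a (2*j+3))⁻¹ * a (2*j+2) * a (2*j+3)) with hBq
    -- Step A: slide t, K rightwards past A0
    have m1 : HEq' (K :: (A0 ++ (s :: t :: E))) (A0 ++ K :: s :: t :: E) :=
      (slide_left (fun z hz => (hAK z hz).eq) _).symm
    have m2 : HEq' (t :: (A0 ++ (K :: s :: t :: E))) (A0 ++ t :: K :: s :: t :: E) :=
      (slide_left (fun z hz => (hAt z hz).eq) _).symm
    have c1 := toC (m1.mono (D ++ A1 ++ [t]) [])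
    have c2 := toC (m2.mono (D ++ A1) [])
    -- Step B: induction hypothesis
    have c3 := ih a hb' hc' D (t :: K :: s :: t :: E)
    rw [← hphi] at c3
    simp only [List.map_cons] at c3
    rw [hconj_t, hconj_K, hconj_s] at c3
    -- Step C: the key Hurwitz computation
    have k := keyG s t K hst htK hsK (l+1)
    have k' := toC (k.mono (D.map (fun d => φ⁻¹ * d * φ) ++ Bq ++ A0)
      (E.map (fun e => φ⁻¹ * e * φ)))
    simp only [show l+1+1 = l+2 from by omega] at k'
    -- Step D: slide v1 leftwards past A0
    have hv1 : ∀ z ∈ A0, z * (K ^ (l+1) * t * (K ^ (l+1))⁻¹)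
        = (K ^ (l+1) * t * (K ^ (l+1))⁻¹) * z := fun z hz =>
      ((((hAK z hz).pow_right (l+1)).mul_right (hAt z hz)).mul_right
        ((hAK z hz).pow_right (l+1)).inv_right).eq
    have m4 : HEq' (A0 ++ (K ^ (l+1) * t * (K ^ (l+1))⁻¹) ::
          (s :: (K ^ (l+2) * t * (K ^ (l+2))⁻¹) :: (List.replicate (l+2) K ++
            E.map (fun e => φ⁻¹ * e * φ))))
        ((K ^ (l+1) * t * (K ^ (l+1))⁻¹) :: (A0 ++
          (s :: (K ^ (l+2) * t * (K ^ (l+2))⁻¹) :: (List.replicate (l+2) K ++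
            E.map (fun e => φ⁻¹ * e * φ))))) := slide_left hv1 _
    have m4' := toC (m4.mono (D.map (fun d => φ⁻¹ * d * φ) ++ Bq) [])
    simp only [List.append_assoc, List.cons_append, List.nil_append, List.append_nil]
      at c1 c2 c3 k' m4' ⊢
    have acc := CEq.trans (CEq.trans (CEq.trans (CEq.trans c1 c2) c3) k') m4'
    refine CEq.trans acc ?_
    -- Step E: global conjugation by K^{-(l+2)}
    refine CEq.trans (conjC ((K ^ (l+2))⁻¹) _) ?_
    simp only [List.map_append, List.map_cons, List.map_map, List.map_replicate]
    have eD : List.map ((fun w => (K ^ (l+2))⁻¹ * w * (K ^ (l+2))⁻¹⁻¹)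
          ∘ (fun d => φ⁻¹ * d * φ)) D
        = List.map (fun d => (K ^ (l+2) * φ)⁻¹ * d * (K ^ (l+2) * φ)) D :=
      List.map_congr_left fun d _ => by
        simp only [Function.comp_apply]
        exact conj_conj (hφK.symm.pow_left (l+2)) d
    have eE : List.map ((fun w => (K ^ (l+2))⁻¹ * w * (K ^ (l+2))⁻¹⁻¹)
          ∘ (fun e => φ⁻¹ * e * φ)) E
        = List.map (fun e => (K ^ (l+2) * φ)⁻¹ * e * (K ^ (l+2) * φ)) E :=
      List.map_congr_left fun d _ => by
        simp only [Function.comp_apply]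
        exact conj_conj (hφK.symm.pow_left (l+2)) d
    have eBfix : List.map (fun w => (K ^ (l+2))⁻¹ * w * (K ^ (l+2))⁻¹⁻¹) Bq = Bq := by
      apply map_id_of
      intro x hx
      rw [hBq] at hx
      simp only [List.mem_map, List.mem_range] at hx
      obtain ⟨j, hj, rfl⟩ := hx
      have d1 : Commute (a (2*j+3)) K := hc (2*j+3) (2*l+3) (by omega) (by omega) (by omega)
      have d2 : Commute (a (2*j+2)) K := hc (2*j+2) (2*l+3) (by omega) (by omega) (by omega)
      have cx : Commute ((a (2*j+3))⁻¹ * a (2*j+2) * a (2*j+3)) K :=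
        (d1.inv_left.mul_left d2).mul_left d1
      exact conj_eq_self_of_commute ((cx.symm.pow_left (l+2)).inv_left)
    have eA0fix : List.map (fun w => (K ^ (l+2))⁻¹ * w * (K ^ (l+2))⁻¹⁻¹) A0 = A0 :=
      map_id_of (fun z hz => conj_eq_self_of_commute (((hAK z hz).symm.pow_left (l+2)).inv_left))
    have hsKc : Commute s K := hsK
    have efixs : (K ^ (l+2))⁻¹ * s * (K ^ (l+2))⁻¹⁻¹ = s :=
      conj_eq_self_of_commute ((hsKc.symm.pow_left (l+2)).inv_left)
    have efixK : (K ^ (l+2))⁻¹ * K * (K ^ (l+2))⁻¹⁻¹ = K := by group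
    have ev1 : (K ^ (l+2))⁻¹ * (K ^ (l+1) * t * (K ^ (l+1))⁻¹) * (K ^ (l+2))⁻¹⁻¹
        = K⁻¹ * t * K := by group
    have ev2 : (K ^ (l+2))⁻¹ * (K ^ (l+2) * t * (K ^ (l+2))⁻¹) * (K ^ (l+2))⁻¹⁻¹ = t := by
      group
    rw [eD, eE, eBfix, eA0fix, efixs, efixK, ev1, ev2]
    exact Relation.ReflTransGen.refl

end S6

/-- Lemma 4.2(b) of the paper: with `b̄ i = (a (i+1))⁻¹ * a i * a (i+1)`,
`D ⌢ (a 1, …, a (2l+1)) ⌢ (a 1, …, a (2l)) ⌢ E` is Hurwitz equivalent up to simultaneous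
conjugation to
`φ⁻¹ D φ ⌢ (b̄ 2, b̄ 4, …, b̄ (2l)) ⌢ (a 1, …, a (2l)) ⌢ (a (2l+1))^{l+1} ⌢ φ⁻¹ E φ`. -/
theorem statement6 {G : Type*} [Group G] (l : ℕ) (hl : 1 ≤ l) (a : ℕ → G)
    (hbraid : ∀ i, 1 ≤ i → i + 1 ≤ 2 * l + 1 →
      a i * a (i + 1) * a i = a (i + 1) * a i * a (i + 1))
    (hcomm : ∀ i j, 1 ≤ i → j ≤ 2 * l + 1 → i + 2 ≤ j → a i * a j = a j * a i)
    (D E : List G) :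
    HurwitzEquivC
      (D ++ seqAsc a 1 (2 * l + 1) ++ seqAsc a 1 (2 * l) ++ E)
      ((D.map fun d => (phiOdd a l)⁻¹ * d * phiOdd a l) ++
        ((List.range l).map fun j =>
          (a (2 * j + 3))⁻¹ * a (2 * j + 2) * a (2 * j + 3)) ++
        seqAsc a 1 (2 * l) ++
        List.replicate (l + 1) (a (2 * l + 1)) ++
        (E.map fun e => (phiOdd a l)⁻¹ * e * phiOdd a l)) := by
  exact S6.aux l a hbraid hcomm D E
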